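/- Every element of the ordered pre-Boolean algebra, realized as a finite union of sets φ̆∩ψ̆ in Θ², is an increasing subset of T = {(x,y) ∈ Θ² : x ≤ y}; and when Θ is finite and totally ordered, every nonempty increasing subset θ of T is such a finite union, namely θ = ⋃_{(a,b)∈θ} ă ∩ b̆. -/
import Mathlib


/-- For `φ ∈ Θ`, the set `φ̆ = {(x,y) ∈ Θ² : x ≤ φ ≤ y}`. -/
def breve {Θ : Type} [LinearOrder Θ] (φ : Θ) : Set (Θ × Θ) :=
  {p | p.1 ≤ φ ∧ φ ≤ p.2}

/-- A subset `θ ⊆ Θ²` is increasing if `(x,y) ∈ θ`, `a ≤ x`, `b ≥ y` imply `(a,b) ∈ θ`. -/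
def IsIncreasing {Θ : Type} [LinearOrder Θ] (θ : Set (Θ × Θ)) : Prop :=
  ∀ x y a b : Θ, (x, y) ∈ θ → a ≤ x → y ≤ b → (a, b) ∈ θ

/-- Every element of the ordered pre-Boolean algebra, realized as a finite union of
sets `φ̆ ∩ ψ̆`, is an increasing subset of `T = {(x,y) ∈ Θ² : x ≤ y}`; and when `Θ`
is finite and totally ordered, every nonempty increasing subset `θ` of `T` is such a
finite union, namely `θ = ⋃_{(a,b)∈θ} ă ∩ b̆`. -/
theorem increasing_subsets_characterization {Θ : Type} [LinearOrder Θ] [Fintype Θ] :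
    (∀ (n : ℕ) (φ ψ : Fin n → Θ),
      (⋃ k : Fin n, breve (φ k) ∩ breve (ψ k)) ⊆ {p : Θ × Θ | p.1 ≤ p.2} ∧
      IsIncreasing (⋃ k : Fin n, breve (φ k) ∩ breve (ψ k))) ∧
    (∀ θ : Set (Θ × Θ), θ ⊆ {p : Θ × Θ | p.1 ≤ p.2} → θ.Nonempty → IsIncreasing θ →
      θ = ⋃ p ∈ θ, breve (Prod.fst p) ∩ breve (Prod.snd p)) := by
  constructor
  · intro n φ ψ
    constructor
    · rintro ⟨x, y⟩ hp
      simp only [Set.mem_iUnion, Set.mem_inter_iff, breve, Set.mem_setOf_eq] at hp ⊢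
      obtain ⟨k, ⟨h1, h2⟩, _, _⟩ := hp
      exact le_trans h1 h2
    · intro x y a b hxy ha hb
      simp only [Set.mem_iUnion, Set.mem_inter_iff, breve, Set.mem_setOf_eq] at hxy ⊢
      obtain ⟨k, ⟨h1, h2⟩, h3, h4⟩ := hxy
      exact ⟨k, ⟨ha.trans h1, h2.trans hb⟩, ha.trans h3, h4.trans hb⟩
  · intro θ hsub _ hinc
    ext ⟨x, y⟩
    simp only [Set.mem_iUnion, Set.mem_inter_iff, breve, Set.mem_setOf_eq]
    constructor
    · intro h
      exact ⟨(x, y), h, ⟨le_refl x, hsub h⟩, hsub h, le_refl y⟩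
    · rintro ⟨⟨a, b⟩, hab, ⟨h1, _⟩, _, h4⟩
      exact hinc a b x y hab h1 h4
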